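/- Let F be a field and (U, V; f_1,…,f_k) a representation of the k-arrow Kronecker quiver over F with n = dim U ≥ 1 and m = dim V ≥ 1. For bases x_1,…,x_n of U and y_1,…,y_m of V, let the support be Φ = { (i,j) ∈ [n]×[m] : the y_j-coefficient of f_l(x_i) is nonzero for some l }. Then the representation is semistable if and only if for every choice of bases of U and V the support Φ is a balanced subset of [n]×[m]. -/

import Mathlib

open scoped BigOperators
open Module

namespace Paper

/-- Semistability of a Kronecker-quiver representation `f : ι → U →ₗ[F] V`:
every nonzero subrepresentation `(U',V')` has slope `dim U'/dim V'` at most `dim U/dim V`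
(stated in cross-multiplied form, with the convention `μ* = ∞` when `dim V' = 0`). -/
def Semistable (F : Type*) [Field F] {ι U V : Type*} [AddCommGroup U] [Module F U]
    [AddCommGroup V] [Module F V] (f : ι → U →ₗ[F] V) : Prop :=
  ∀ (U' : Submodule F U) (V' : Submodule F V),
    (∀ l, U'.map (f l) ≤ V') → ¬(U' = ⊥ ∧ V' = ⊥) →
    finrank F U' * finrank F V ≤ finrank F U * finrank F V'

/-- A subset `Φ ⊆ J × K` is balanced if some probability distribution supported inside `Φ`
has uniform marginals on both `J` and `K`. -/
def Balanced {J K : Type*} [Fintype J] [Fintype K] (Φ : Set (J × K)) : Prop :=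
  ∃ P : J × K → ℝ, (∀ x, 0 ≤ P x) ∧ (∑ x, P x) = 1 ∧ (∀ x, P x ≠ 0 → x ∈ Φ) ∧
    (∀ j : J, (∑ kk, P (j, kk)) = 1 / (Fintype.card J : ℝ)) ∧
    (∀ kk : K, (∑ j, P (j, kk)) = 1 / (Fintype.card K : ℝ))

/-- a Kronecker-quiver representation with `dim U = n ≥ 1`, `dim V = m ≥ 1`
is semistable iff for every choice of bases of `U` and `V`, the support
`Φ = {(i,j) : ∃ l, (f_l(x_i))_j ≠ 0}` is a balanced subset of `[n]×[m]`. -/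
lemma hall_of_balanced {n m : ℕ} (hn : 0 < n) (hm : 0 < m) {Φ : Set (Fin n × Fin m)}
    (hB : Balanced Φ) (S : Finset (Fin n)) (T : Finset (Fin m))
    (hT : ∀ i ∈ S, ∀ j, (i, j) ∈ Φ → j ∈ T) :
    S.card * m ≤ n * T.card := by
  obtain ⟨P, hP0, _, hsupp, hrow, hcol⟩ := hB
  have hn' : (0:ℝ) < n := by exact_mod_cast hn
  have hm' : (0:ℝ) < m := by exact_mod_cast hm
  have h1 : (S.card : ℝ) / n = ∑ i ∈ S, ∑ j, P (i, j) := by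
    rw [Finset.sum_congr rfl (fun i _ => hrow i)]
    simp [div_eq_mul_inv]
  have h2 : ∀ i ∈ S, ∑ j, P (i, j) = ∑ j ∈ T, P (i, j) := by
    intro i hi
    refine (Finset.sum_subset (Finset.subset_univ T) ?_).symm
    intro j _ hj
    by_contra hne
    exact hj (hT i hi j (hsupp (i, j) hne))
  have h3 : (S.card : ℝ) / n ≤ (T.card : ℝ) / m := by
    rw [h1, Finset.sum_congr rfl h2, Finset.sum_comm]
    calc ∑ j ∈ T, ∑ i ∈ S, P (i, j)
        ≤ ∑ j ∈ T, ∑ i, P (i, j) := by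
          refine Finset.sum_le_sum fun j _ => ?_
          exact Finset.sum_le_sum_of_subset_of_nonneg (Finset.subset_univ S)
            (fun i _ _ => hP0 (i, j))
      _ = ∑ j ∈ T, (1 / (m:ℝ)) := by
          refine Finset.sum_congr rfl fun j _ => ?_
          simpa using hcol j
      _ = (T.card : ℝ) / m := by simp [div_eq_mul_inv]
  have h4 := (div_le_div_iff₀ hn' hm').mp h3
  have h5 : ((S.card * m : ℕ) : ℝ) ≤ ((n * T.card : ℕ) : ℝ) := by push_cast; linarith
  exact_mod_cast h5

lemma balanced_of_hall {n m : ℕ} (hn : 0 < n) (hm : 0 < m) (Φ : Set (Fin n × Fin m))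
    [DecidablePred (· ∈ Φ)]
    (h : ∀ S : Finset (Fin n),
      S.card * m ≤ n * (Finset.univ.filter (fun j => ∃ i ∈ S, (i, j) ∈ Φ)).card) :
    Balanced Φ := by
  classical
  set t : Fin n × Fin m → Finset (Fin m × Fin n) :=
    fun p => (Finset.univ.filter (fun j => (p.1, j) ∈ Φ)) ×ˢ Finset.univ with ht
  have hall : ∀ s : Finset (Fin n × Fin m), s.card ≤ (s.biUnion t).card := by
    intro s
    set S := s.image Prod.fst with hS
    have h1 : s.card ≤ S.card * m := by
      have hsub : s ⊆ S ×ˢ Finset.univ := by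
        intro p hp
        simp only [Finset.mem_product, Finset.mem_univ, and_true, hS, Finset.mem_image]
        exact ⟨p, hp, rfl⟩
      calc s.card ≤ (S ×ˢ (Finset.univ : Finset (Fin m))).card := Finset.card_le_card hsub
        _ = S.card * m := by simp [Finset.card_product]
    have h2 : s.biUnion t =
        (Finset.univ.filter (fun j => ∃ i ∈ S, (i, j) ∈ Φ)) ×ˢ Finset.univ := by
      ext q
      simp only [Finset.mem_biUnion, ht, Finset.mem_product, Finset.mem_univ, and_true,
        Finset.mem_filter, true_and, hS, Finset.mem_image]
      constructor
      · rintro ⟨p, hp, hq⟩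
        exact ⟨p.1, ⟨p, hp, rfl⟩, hq⟩
      · rintro ⟨i, ⟨p, hp, rfl⟩, hq⟩
        exact ⟨p, hp, hq⟩
    calc s.card ≤ S.card * m := h1
      _ ≤ n * (Finset.univ.filter (fun j => ∃ i ∈ S, (i, j) ∈ Φ)).card := h S
      _ = (s.biUnion t).card := by rw [h2]; simp [Finset.card_product, mul_comm]
  obtain ⟨g, hginj, hgmem⟩ := (Finset.all_card_le_biUnion_card_iff_exists_injective t).mp hall
  have hgbij : Function.Bijective g :=
    (Fintype.bijective_iff_injective_and_card g).mpr ⟨hginj, by simp [mul_comm]⟩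
  set N : Fin n → Fin m → ℕ :=
    fun i j => (Finset.univ.filter (fun a : Fin m => (g (i, a)).1 = j)).card with hN
  have hrowN : ∀ i, ∑ j, N i j = m := by
    intro i
    have := Finset.card_eq_sum_card_fiberwise
      (f := fun a : Fin m => (g (i, a)).1) (s := Finset.univ) (t := Finset.univ)
      (fun a _ => Finset.mem_univ _)
    simpa [hN] using this.symm
  have hcolN : ∀ j, ∑ i, N i j = n := by
    intro j
    set sJ := Finset.univ.filter (fun p : Fin n × Fin m => (g p).1 = j) with hsJ
    have hcard : sJ.card = n := by
      have himg : sJ.image g = Finset.univ.filter (fun q : Fin m × Fin n => q.1 = j) := by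
        ext q
        simp only [Finset.mem_image, hsJ, Finset.mem_filter, Finset.mem_univ, true_and]
        constructor
        · rintro ⟨p, hp, rfl⟩; exact hp
        · intro hq
          obtain ⟨p, rfl⟩ := hgbij.2 q
          exact ⟨p, hq, rfl⟩
      have h1 : (sJ.image g).card = sJ.card := Finset.card_image_of_injective _ hginj
      have h2 : (Finset.univ.filter (fun q : Fin m × Fin n => q.1 = j)).card = n := by
        have : Finset.univ.filter (fun q : Fin m × Fin n => q.1 = j)
            = {j} ×ˢ Finset.univ := by
          ext ⟨j', b⟩; simp [Finset.mem_product, eq_comm]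
        rw [this]; simp
      rw [← h1, himg, h2]
    have hfib : sJ.card = ∑ i, (sJ.filter (fun p => p.1 = i)).card :=
      Finset.card_eq_sum_card_fiberwise (fun p _ => Finset.mem_univ p.1)
    have heach : ∀ i, (sJ.filter (fun p => p.1 = i)).card = N i j := by
      intro i
      have : sJ.filter (fun p => p.1 = i)
          = (Finset.univ.filter (fun a : Fin m => (g (i, a)).1 = j)).image
              (fun a => (i, a)) := by
        ext ⟨i', a⟩
        simp only [hsJ, Finset.mem_filter, Finset.mem_univ, true_and, Finset.mem_image,
          Prod.mk.injEq]
        constructor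
        · rintro ⟨hg, rfl⟩; exact ⟨a, hg, rfl, rfl⟩
        · rintro ⟨a', hg, rfl, rfl⟩; exact ⟨hg, rfl⟩
      rw [this, Finset.card_image_of_injective _ (fun a b hab => by
        simpa using hab)]
    calc ∑ i, N i j = ∑ i, (sJ.filter (fun p => p.1 = i)).card :=
          Finset.sum_congr rfl fun i _ => (heach i).symm
      _ = sJ.card := hfib.symm
      _ = n := hcard
  have hnm : ((n : ℝ) * m) ≠ 0 := by positivity
  refine ⟨fun x => (N x.1 x.2 : ℝ) / (n * m), fun x => by positivity, ?_, ?_, ?_, ?_⟩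
  · rw [Fintype.sum_prod_type]
    have : ∀ i : Fin n, ∑ j, (N i j : ℝ) / (n * m) = (m : ℝ) / (n * m) := by
      intro i
      rw [← Finset.sum_div]
      congr 1
      exact_mod_cast congrArg (Nat.cast (R := ℝ)) (hrowN i)
    rw [Finset.sum_congr rfl fun i _ => this i]
    field_simp
    rw [Finset.sum_const, Finset.card_univ, Fintype.card_fin, nsmul_eq_mul]
    exact mul_one_div_cancel (by positivity)
  · rintro ⟨i, j⟩ hne
    have hNne : N i j ≠ 0 := by
      intro h0; apply hne; simp [h0]
    obtain ⟨a, ha⟩ := Finset.card_pos.mp (Nat.pos_of_ne_zero hNne)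
    simp only [hN, Finset.mem_filter, Finset.mem_univ, true_and] at ha
    have := hgmem (i, a)
    simp only [ht, Finset.mem_product, Finset.mem_filter, Finset.mem_univ, true_and] at this
    rw [ha] at this
    exact this.1
  · intro i
    rw [← Finset.sum_div]
    have : (∑ j, (N i j : ℝ)) = m := by exact_mod_cast congrArg (Nat.cast (R := ℝ)) (hrowN i)
    rw [this]
    simp only [Fintype.card_fin]
    field_simp
    try ring
  · intro j
    rw [← Finset.sum_div]
    have : (∑ i, (N i j : ℝ)) = n := by exact_mod_cast congrArg (Nat.cast (R := ℝ)) (hcolN j)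
    rw [this]
    simp only [Fintype.card_fin]
    field_simp
    try ring

lemma exists_adapted_basis (F : Type) [Field F] (U : Type) [AddCommGroup U] [Module F U]
    [FiniteDimensional F U] (U' : Submodule F U) (n d : ℕ)
    (hU : finrank F U = n) (hd : finrank F U' = d) :
    ∃ (b : Basis (Fin n) F U) (S : Finset (Fin n)), S.card = d ∧ (∀ i ∈ S, b i ∈ U') ∧
      U' ≤ Submodule.span F (b '' ↑S) := by
  obtain ⟨W, hW⟩ := U'.exists_isCompl
  have hsum : finrank F U' + finrank F W = finrank F U :=
    Submodule.finrank_add_eq_of_isCompl hW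
  have hdn : d ≤ n := by omega
  have hWr : finrank F W = n - d := by omega
  let b' : Basis (Fin d) F U' := Module.finBasisOfFinrankEq F U' hd
  let bW : Basis (Fin (n - d)) F W := Module.finBasisOfFinrankEq F W hWr
  let e : (Fin d ⊕ Fin (n - d)) ≃ Fin n := finSumFinEquiv.trans (finCongr (by omega))
  let b : Basis (Fin n) F U :=
    ((b'.prod bW).map (Submodule.prodEquivOfIsCompl U' W hW)).reindex e
  have key : ∀ i : Fin d, b (e (Sum.inl i)) = (b' i : U) := by
    intro i
    simp only [b, Basis.reindex_apply, Equiv.symm_apply_apply, Basis.map_apply]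
    have h1 : (b'.prod bW) (Sum.inl i) = (b' i, (0 : W)) :=
      Prod.ext (b'.prod_apply_inl_fst bW i) (b'.prod_apply_inl_snd bW i)
    rw [h1, Submodule.coe_prodEquivOfIsCompl']
    simp
  refine ⟨b, Finset.univ.image (fun i : Fin d => e (Sum.inl i)), ?_, ?_, ?_⟩
  · rw [Finset.card_image_of_injective _
      (fun a b hab => Sum.inl_injective (e.injective hab) :
        Function.Injective (fun i => e (Sum.inl i)))]
    simp
  · intro i hi
    simp only [Finset.mem_image, Finset.mem_univ, true_and] at hi
    obtain ⟨i0, rfl⟩ := hi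
    rw [key i0]
    exact (b' i0).2
  · have hU' : U' = Submodule.span F (Set.range fun i : Fin d => (b' i : U)) := by
      conv_lhs => rw [← Submodule.map_subtype_top U']
      rw [← b'.span_eq, Submodule.map_span, ← Set.range_comp]
      rfl
    rw [hU']
    rw [Submodule.span_le]
    rintro x ⟨i0, rfl⟩
    apply Submodule.subset_span
    exact ⟨e (Sum.inl i0), by simp, by simpa using key i0⟩

lemma finrank_span_basis_image {F U ι : Type*} [Field F] [AddCommGroup U] [Module F U]
    [Fintype ι] (b : Basis ι F U) (S : Finset ι) :
    finrank F (Submodule.span F (b '' ↑S)) = S.card := by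
  classical
  rw [Set.image_eq_range (⇑b) (↑S : Set ι)]
  have li : LinearIndependent F (fun x : ↥(↑S : Set ι) => b ↑x) :=
    b.linearIndependent.comp Subtype.val Subtype.val_injective
  rw [finrank_span_eq_card li]
  simp

theorem statement10 (F : Type) [Field F] (k : ℕ) (U V : Type)
    [AddCommGroup U] [Module F U] [AddCommGroup V] [Module F V]
    [FiniteDimensional F U] [FiniteDimensional F V]
    (f : Fin k → U →ₗ[F] V) (n m : ℕ) (hn : 1 ≤ n) (hm : 1 ≤ m)
    (hU : finrank F U = n) (hV : finrank F V = m) :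
    Semistable F f ↔
      ∀ (bU : Basis (Fin n) F U) (bV : Basis (Fin m) F V),
        Balanced { x : Fin n × Fin m | ∃ l, bV.repr (f l (bU x.1)) x.2 ≠ 0 } := by
  constructor
  · intro hss bU bV
    classical
    set Φ : Set (Fin n × Fin m) := { x | ∃ l, bV.repr (f l (bU x.1)) x.2 ≠ 0 } with hΦ
    apply balanced_of_hall hn hm
    intro S
    rcases S.eq_empty_or_nonempty with rfl | ⟨i0, hi0⟩
    · simp
    set T := Finset.univ.filter (fun j => ∃ i ∈ S, (i, j) ∈ Φ) with hT
    set U' := Submodule.span F (bU '' ↑S) with hU'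
    set V' := Submodule.span F (bV '' ↑T) with hV'
    have hmap : ∀ l, U'.map (f l) ≤ V' := by
      intro l
      rw [hU', Submodule.map_span_le]
      rintro x ⟨i, hi, rfl⟩
      rw [hV', Basis.mem_span_image]
      intro j hj
      rw [Finset.mem_coe, Finsupp.mem_support_iff] at hj
      rw [Finset.mem_coe, hT, Finset.mem_filter]
      exact ⟨Finset.mem_univ _, i, Finset.mem_coe.mp hi, l, hj⟩
    have hnt : ¬(U' = ⊥ ∧ V' = ⊥) := by
      rintro ⟨hb, -⟩
      have h1 : bU i0 ∈ U' := Submodule.subset_span ⟨i0, Finset.mem_coe.mpr hi0, rfl⟩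
      rw [hb, Submodule.mem_bot] at h1
      exact bU.ne_zero i0 h1
    have := hss U' V' hmap hnt
    rwa [hU, hV, hU', hV', finrank_span_basis_image, finrank_span_basis_image] at this
  · intro hb U' V' hmap hnt
    by_cases hd0 : finrank F U' = 0
    · simp [hd0]
    classical
    set V'' := ⨆ l, U'.map (f l) with hV''def
    have hV''le : V'' ≤ V' := iSup_le hmap
    obtain ⟨bU, S, hScard, hSmem, -⟩ :=
      exists_adapted_basis F U U' n (finrank F U') hU rfl
    obtain ⟨bV, T, hTcard, -, hTspan⟩ :=
      exists_adapted_basis F V V'' m (finrank F V'') hV rfl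
    have hB := hb bU bV
    have key : S.card * m ≤ n * T.card := by
      refine hall_of_balanced hn hm hB S T ?_
      rintro i hi j ⟨l, hl⟩
      have h1 : f l (bU i) ∈ V'' := by
        refine (le_iSup (fun l => U'.map (f l)) l) ?_
        exact Submodule.mem_map_of_mem (hSmem i hi)
      have h2 : f l (bU i) ∈ Submodule.span F (bV '' ↑T) := hTspan h1
      have h3 := Basis.repr_support_subset_of_mem_span bV (↑T) h2
      exact Finset.mem_coe.mp (h3 (Finset.mem_coe.mpr (Finsupp.mem_support_iff.mpr hl)))
    rw [hScard, hTcard] at key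
    rw [hU, hV]
    calc finrank F U' * m ≤ n * finrank F V'' := key
      _ ≤ n * finrank F V' := Nat.mul_le_mul_left n (Submodule.finrank_mono hV''le)

end Paper
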